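/- arXiv:2202.12770 — 2 statements merged into one kernel-verified Lean document; each statement's English description precedes it below -/
import Mathlib

section
/- Fix T > 0, d ≥ 1, β = (β₁,…,β_d) ∈ ℝ^d with ‖β‖_∞ = max_i |β_i|, and a d×d substochastic matrix Q with zero diagonal and Qⁿ → 0, with regulator map ψ. Suppose K ∈ (0,∞) is such that ψ is K-Lipschitz with respect to the uniform metric: for all ξ, ζ ∈ ∏_{i=1}^d D[0,T], max_i sup_{t∈[0,T]} |ψ⁽ⁱ⁾(ξ)(t) − ψ⁽ⁱ⁾(ζ)(t)| ≤ K max_i sup_{t∈[0,T]} |ξ⁽ⁱ⁾(t) − ζ⁽ⁱ⁾(t)|. Let w⁽¹⁾,…,w⁽ᵈ⁾ : [0,T] → [0,T] be nondecreasing with w⁽ⁱ⁾(0)=0 and w⁽ⁱ⁾(T)=T, and set ‖w − e‖_∞ = max_i sup_{t∈[0,T]} |w⁽ⁱ⁾(t) − t|. Then for every ξ with each ξ⁽ⁱ⁾ ∈ D^{β_i}[0,T], writing ξ∘w for the d-tuple with coordinates ξ⁽ⁱ⁾∘w⁽ⁱ⁾, one has max_i sup_{t∈[0,T]} |ψ⁽ⁱ⁾(ξ∘w)(t)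 − ψ⁽ⁱ⁾(ξ)(t)| ≤ 3K‖β‖_∞‖w − e‖_∞. -/
open Set Filter

noncomputable section

/-- `f` is càdlàg on `[0,T]`: right-continuous on `[0,T)` and with left limits on `(0,T]`. -/
def Cadlag (T : ℝ) (f : ℝ → ℝ) : Prop :=
  (∀ t ∈ Set.Ico (0:ℝ) T, Filter.Tendsto f (nhdsWithin t (Set.Ici t)) (nhds (f t))) ∧
  (∀ t ∈ Set.Ioc (0:ℝ) T, ∃ L : ℝ, Filter.Tendsto f (nhdsWithin t (Set.Iio t)) (nhds L))

/-- `lam` is a strictly increasing continuous bijection of `[0,T]` onto itself. -/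
def IsTimeChange (T : ℝ) (lam : ℝ → ℝ) : Prop :=
  StrictMonoOn lam (Set.Icc 0 T) ∧ ContinuousOn lam (Set.Icc 0 T) ∧
  Set.MapsTo lam (Set.Icc 0 T) (Set.Icc 0 T) ∧
  Set.SurjOn lam (Set.Icc 0 T) (Set.Icc 0 T) ∧ lam 0 = 0 ∧ lam T = T

/-- Uniform distance of two (bounded) functions over `[0,T]`. -/
def unifDist (T : ℝ) (f g : ℝ → ℝ) : ℝ :=
  sSup {r : ℝ | ∃ t ∈ Set.Icc (0:ℝ) T, r = |f t - g t|}

/-- The Skorokhod `J₁` distance on `[0,T]`. -/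
def J1Dist (T : ℝ) (f g : ℝ → ℝ) : ℝ :=
  sInf {r : ℝ | ∃ lam : ℝ → ℝ, IsTimeChange T lam ∧
    r = max (unifDist T (fun t => f (lam t)) g) (unifDist T lam id)}

/-- The product `J₁` distance on `d`-tuples of paths. -/
def prodJ1Dist (T : ℝ) {d : ℕ} (ξ ζ : Fin d → ℝ → ℝ) : ℝ :=
  ∑ i, J1Dist T (ξ i) (ζ i)

/-- A substochastic routing matrix with zero diagonal whose powers tend to zero. -/
def Substochastic {d : ℕ} (Q : Matrix (Fin d) (Fin d) ℝ) : Prop :=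
  (∀ i j, 0 ≤ Q i j) ∧ (∀ i, Q i i = 0) ∧ (∀ i, ∑ j, Q i j ≤ 1) ∧
  Filter.Tendsto (fun n : ℕ => Q ^ n) Filter.atTop (nhds 0)

/-- The reflection matrix `𝒬 = I - Qᵀ`. -/
def refMatrix {d : ℕ} (Q : Matrix (Fin d) (Fin d) ℝ) : Matrix (Fin d) (Fin d) ℝ :=
  1 - Q.transpose

/-- `ζ` belongs to the feasible regulator set `Ψ(ξ)`: each coordinate of `ζ` is a
nondecreasing càdlàg path, nonnegative at the origin, and `ξ + 𝒬 ζ ≥ 0` on `[0,T]`. -/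
def Feasible (T : ℝ) {d : ℕ} (Q : Matrix (Fin d) (Fin d) ℝ)
    (ξ ζ : Fin d → ℝ → ℝ) : Prop :=
  (∀ i, Cadlag T (ζ i) ∧ MonotoneOn (ζ i) (Set.Icc 0 T) ∧ 0 ≤ ζ i 0) ∧
  (∀ t ∈ Set.Icc (0:ℝ) T, ∀ i, 0 ≤ ξ i t + ∑ j, refMatrix Q i j * ζ j t)

/-- The regulator map `ψ`, defined coordinatewise and pointwise as the infimum of the
feasible regulator set. -/
def regulator (T : ℝ) {d : ℕ} (Q : Matrix (Fin d) (Fin d) ℝ)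
    (ξ : Fin d → ℝ → ℝ) : Fin d → ℝ → ℝ :=
  fun i t => sInf {z : ℝ | ∃ ζ, Feasible T Q ξ ζ ∧ z = ζ i t}

/-- The content map `φ(ξ) = ξ + 𝒬 ψ(ξ)`. -/
def content (T : ℝ) {d : ℕ} (Q : Matrix (Fin d) (Fin d) ℝ)
    (ξ : Fin d → ℝ → ℝ) : Fin d → ℝ → ℝ :=
  fun i t => ξ i t + ∑ j, refMatrix Q i j * regulator T Q ξ j t

/-- `D^β[0,T]`: càdlàg paths `f` with `f 0 ≥ 0` such that `t ↦ f t - β t` is nondecreasing. -/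
def DBeta (T β : ℝ) (f : ℝ → ℝ) : Prop :=
  Cadlag T f ∧ 0 ≤ f 0 ∧ MonotoneOn (fun t => f t - β * t) (Set.Icc 0 T)

/-- `max_i sup_{t ∈ [0,T]} |ξ⁽ⁱ⁾(t) - ζ⁽ⁱ⁾(t)|`, the uniform distance of tuples of paths. -/
def supDistTuple (T : ℝ) {d : ℕ} (ξ ζ : Fin d → ℝ → ℝ) : ℝ :=
  sSup {r : ℝ | ∃ i : Fin d, ∃ t ∈ Set.Icc (0:ℝ) T, r = |ξ i t - ζ i t|}

/-- `sup_{t ∈ [0,T]} |w(t) - t|`, the uniform deviation of a time deformation from identity. -/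
def supTimeDev (T : ℝ) (w : ℝ → ℝ) : ℝ :=
  sSup {r : ℝ | ∃ t ∈ Set.Icc (0:ℝ) T, r = |w t - t|}

section AuxLemmas

variable {T : ℝ} {d : ℕ} {Q : Matrix (Fin d) (Fin d) ℝ}

lemma cadlag_const {c : ℝ} : Cadlag T (fun _ => c) :=
  ⟨fun _ _ => tendsto_const_nhds, fun _ _ => ⟨c, tendsto_const_nhds⟩⟩

lemma Cadlag.add' {f g : ℝ → ℝ} (hf : Cadlag T f) (hg : Cadlag T g) :
    Cadlag T (fun t => f t + g t) := by
  refine ⟨fun t ht => (hf.1 t ht).add (hg.1 t ht), fun t ht => ?_⟩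
  obtain ⟨L1, h1⟩ := hf.2 t ht
  obtain ⟨L2, h2⟩ := hg.2 t ht
  exact ⟨L1 + L2, h1.add h2⟩

lemma cadlag_comp_shift {f : ℝ → ℝ} (hT : 0 ≤ T) {a : ℝ} (ha : 0 ≤ a) (hf : Cadlag T f) :
    Cadlag T (fun s => f (max (s - a) 0)) := by
  have hcont : Continuous fun s : ℝ => max (s - a) 0 :=
    (continuous_id.sub continuous_const).max continuous_const
  constructor
  · intro t ht
    set u := max (t - a) 0 with hu
    have hu' : u ∈ Set.Ico (0:ℝ) T := by
      constructor
      · exact le_max_right _ _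
      · have : u ≤ t := max_le (by linarith) ht.1
        linarith [ht.2]
    have h1 : Tendsto (fun s => max (s - a) 0) (nhdsWithin t (Set.Ici t))
        (nhdsWithin u (Set.Ici u)) := by
      apply tendsto_nhdsWithin_of_tendsto_nhds_of_eventually_within
      · exact (hcont.tendsto t).mono_left nhdsWithin_le_nhds
      · filter_upwards [eventually_mem_nhdsWithin] with s hs
        have hs' : t ≤ s := hs
        exact Set.mem_Ici.mpr (max_le_max (by linarith) le_rfl)
    exact (hf.1 u hu').comp h1
  · intro t ht
    by_cases hta : t ≤ a
    · refine ⟨f 0, Tendsto.congr' ?_ tendsto_const_nhds⟩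
      filter_upwards [eventually_mem_nhdsWithin] with s hs
      have hs' : s < t := hs
      have : max (s - a) 0 = 0 := max_eq_right (by linarith)
      simp [this]
    · push_neg at hta
      have humax : max (t - a) 0 = t - a := max_eq_left (by linarith)
      have hu' : t - a ∈ Set.Ioc (0:ℝ) T := ⟨by linarith, by linarith [ht.2]⟩
      obtain ⟨L, hL⟩ := hf.2 (t - a) hu'
      refine ⟨L, ?_⟩
      have h1 : Tendsto (fun s => max (s - a) 0) (nhdsWithin t (Set.Iio t))
          (nhdsWithin (t - a) (Set.Iio (t - a))) := by
        apply tendsto_nhdsWithin_of_tendsto_nhds_of_eventually_within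
        · have := (hcont.tendsto t).mono_left (nhdsWithin_le_nhds (s := Set.Iio t))
          rwa [humax] at this
        · filter_upwards [eventually_mem_nhdsWithin,
            eventually_nhdsWithin_of_eventually_nhds (eventually_gt_nhds hta)] with s hs1 hs2
          have hs1' : s < t := hs1
          have hs2' : a < s := hs2
          refine Set.mem_Iio.mpr ?_
          rw [max_eq_left (by linarith)]
          linarith
      exact hL.comp h1

end AuxLemmas

section RegLemmas

variable {T : ℝ} {d : ℕ} {Q : Matrix (Fin d) (Fin d) ℝ}

/-- The set of feasible-regulator values at coordinate `i`, time `t`. -/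
def RS (T : ℝ) {d : ℕ} (Q : Matrix (Fin d) (Fin d) ℝ) (χ : Fin d → ℝ → ℝ)
    (i : Fin d) (t : ℝ) : Set ℝ :=
  {z : ℝ | ∃ ζ, Feasible T Q χ ζ ∧ z = ζ i t}

lemma regulator_eq_sInf (χ : Fin d → ℝ → ℝ) (i : Fin d) (t : ℝ) :
    regulator T Q χ i t = sInf (RS T Q χ i t) := rfl

lemma RS_nonneg (hT : 0 ≤ T) {χ : Fin d → ℝ → ℝ} {i : Fin d} {t : ℝ}
    (ht : t ∈ Set.Icc (0:ℝ) T) {z : ℝ} (hz : z ∈ RS T Q χ i t) : 0 ≤ z := by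
  obtain ⟨ζ, hζ, rfl⟩ := hz
  exact le_trans (hζ.1 i).2.2 ((hζ.1 i).2.1 ⟨le_rfl, hT⟩ ht ht.1)

lemma RS_bddBelow (hT : 0 ≤ T) {χ : Fin d → ℝ → ℝ} {i : Fin d} {t : ℝ}
    (ht : t ∈ Set.Icc (0:ℝ) T) : BddBelow (RS T Q χ i t) :=
  ⟨0, fun z hz => RS_nonneg hT ht hz⟩

lemma reg_nonneg (hT : 0 ≤ T) {χ : Fin d → ℝ → ℝ} {i : Fin d} {t : ℝ}
    (ht : t ∈ Set.Icc (0:ℝ) T) : 0 ≤ regulator T Q χ i t :=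
  Real.sInf_nonneg fun _ hz => RS_nonneg hT ht hz

/-- Computation of the reflection-matrix pairing. -/
lemma refMatrix_sum (c : Fin d → ℝ) (i : Fin d) :
    ∑ j, refMatrix Q i j * c j = c i - ∑ j, Q j i * c j := by
  have : ∀ j, refMatrix Q i j * c j = (if i = j then c j else 0) - Q j i * c j := by
    intro j
    simp only [refMatrix, Matrix.sub_apply, Matrix.one_apply, Matrix.transpose_apply, sub_mul,
      ite_mul, one_mul, zero_mul]
  rw [Finset.sum_congr rfl fun j _ => this j, Finset.sum_sub_distrib, Finset.sum_ite_eq]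
  simp

/-- Existence of a nonnegative constant vector `c` with `(I - Qᵀ) c ≥ M 1`. -/
lemma exists_cvec (hQ : Substochastic Q) {M : ℝ} (hM : 0 ≤ M) :
    ∃ c : Fin d → ℝ, (∀ i, 0 ≤ c i) ∧ ∀ i, M ≤ c i - ∑ j, Q j i * c j := by
  have hpow : ∀ n : ℕ, ∀ k i, 0 ≤ (Q ^ n) k i := by
    intro n
    induction n with
    | zero =>
      intro k i
      rw [pow_zero, Matrix.one_apply]
      split <;> norm_num
    | succ n ih =>
      intro k i
      rw [pow_succ, Matrix.mul_apply]
      exact Finset.sum_nonneg fun j _ => mul_nonneg (ih k j) (hQ.1 j i)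
  set ε : ℝ := 1 / (2 * (d + 1)) with hεdef
  have hε0 : 0 < ε := by positivity
  have hent : ∀ k i, Tendsto (fun n => (Q ^ n) k i) atTop (nhds 0) := by
    intro k i
    have hc : Continuous fun X : Matrix (Fin d) (Fin d) ℝ => X k i :=
      (continuous_apply i).comp (continuous_apply k)
    have h := (hc.tendsto 0).comp hQ.2.2.2
    simpa [Function.comp_def] using h
  have h2 : ∀ᶠ n in atTop, ∀ k i : Fin d, (Q ^ n) k i < ε := by
    rw [eventually_all]
    intro k
    rw [eventually_all]
    intro i
    exact (hent k i).eventually (gt_mem_nhds hε0)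
  obtain ⟨m, hm⟩ := eventually_atTop.mp h2
  set S : ℕ → Fin d → ℝ := fun n i => ∑ k, (Q ^ n) k i with hSdef
  refine ⟨fun i => 2 * M * ∑ n ∈ Finset.range (m + 1), S n i, fun i => ?_, fun i => ?_⟩
  · exact mul_nonneg (by linarith)
      (Finset.sum_nonneg fun n _ => Finset.sum_nonneg fun k _ => hpow n k i)
  · have key : ∀ n, ∑ j, Q j i * S n j = S (n + 1) i := by
      intro n
      calc ∑ j, Q j i * ∑ k, (Q ^ n) k j = ∑ j, ∑ k, (Q ^ n) k j * Q j i := by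
            refine Finset.sum_congr rfl fun j _ => ?_
            rw [Finset.mul_sum]
            exact Finset.sum_congr rfl fun k _ => by ring
        _ = ∑ k, ∑ j, (Q ^ n) k j * Q j i := Finset.sum_comm
        _ = ∑ k, (Q ^ (n + 1)) k i :=
            Finset.sum_congr rfl fun k _ => by rw [pow_succ, Matrix.mul_apply]
    have hsum : ∑ j, Q j i * (2 * M * ∑ n ∈ Finset.range (m + 1), S n j)
        = 2 * M * ∑ n ∈ Finset.range (m + 1), S (n + 1) i := by
      calc ∑ j, Q j i * (2 * M * ∑ n ∈ Finset.range (m + 1), S n j)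
          = 2 * M * ∑ j, Q j i * ∑ n ∈ Finset.range (m + 1), S n j := by
            rw [Finset.mul_sum]
            exact Finset.sum_congr rfl fun j _ => by ring
        _ = 2 * M * ∑ j, ∑ n ∈ Finset.range (m + 1), Q j i * S n j := by
            congr 1
            exact Finset.sum_congr rfl fun j _ => Finset.mul_sum _ _ _
        _ = 2 * M * ∑ n ∈ Finset.range (m + 1), ∑ j, Q j i * S n j := by rw [Finset.sum_comm]
        _ = 2 * M * ∑ n ∈ Finset.range (m + 1), S (n + 1) i := by
            congr 1
            exact Finset.sum_congr rfl fun n _ => key n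
    have htel : ∑ n ∈ Finset.range (m + 1), S n i - ∑ n ∈ Finset.range (m + 1), S (n + 1) i
        = S 0 i - S (m + 1) i := by
      rw [← Finset.sum_sub_distrib]
      exact Finset.sum_range_sub' (fun n => S n i) (m + 1)
    have hS0 : S 0 i = 1 := by
      simp [hSdef, Matrix.one_apply]
    have hSm : S (m + 1) i ≤ 1 / 2 := by
      have h1 : S (m + 1) i ≤ ∑ _k : Fin d, ε :=
        Finset.sum_le_sum fun k _ => (hm (m + 1) (Nat.le_succ m) k i).le
      have h2 : ∑ _k : Fin d, ε = d * ε := by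
        rw [Finset.sum_const, Finset.card_univ, Fintype.card_fin, nsmul_eq_mul]
      have h3 : (d : ℝ) * ε ≤ 1 / 2 := by
        rw [hεdef, mul_one_div, div_le_div_iff₀ (by positivity) (by norm_num : (0:ℝ) < 2)]
        push_cast
        linarith
      linarith
    have hexp : (fun i => 2 * M * ∑ n ∈ Finset.range (m + 1), S n i) i
        - ∑ j, Q j i * (fun i => 2 * M * ∑ n ∈ Finset.range (m + 1), S n i) j
        = 2 * M * (S 0 i - S (m + 1) i) := by
      simp only []
      rw [hsum, ← mul_sub, htel]
    rw [hexp, hS0]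
    nlinarith
end RegLemmas

section RegLemmas2

variable {T : ℝ} {d : ℕ} {Q : Matrix (Fin d) (Fin d) ℝ}

/-- If `χ` is bounded below by `-M` on `[0,T]`, then the feasible set is nonempty. -/
lemma feasible_of_lb (hQ : Substochastic Q) {χ : Fin d → ℝ → ℝ} {M : ℝ} (hM : 0 ≤ M)
    (hlb : ∀ i, ∀ t ∈ Set.Icc (0:ℝ) T, -M ≤ χ i t) : ∃ ζ, Feasible T Q χ ζ := by
  obtain ⟨c, hc0, hcM⟩ := exists_cvec hQ hM
  refine ⟨fun i _ => c i, ⟨fun i => ⟨cadlag_const, monotoneOn_const, hc0 i⟩, ?_⟩⟩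
  intro t ht i
  have := refMatrix_sum (Q := Q) c i
  rw [this]
  have := hcM i
  have := hlb i t ht
  linarith

/-- Antitonicity of the regulator: a pointwise larger input has smaller regulator. -/
lemma reg_anti (hT : 0 ≤ T) {χ₁ χ₂ : Fin d → ℝ → ℝ}
    (h : ∀ t ∈ Set.Icc (0:ℝ) T, ∀ i, χ₁ i t ≤ χ₂ i t)
    (hne : ∃ ζ, Feasible T Q χ₁ ζ) {i : Fin d} {t : ℝ} (ht : t ∈ Set.Icc (0:ℝ) T) :
    regulator T Q χ₂ i t ≤ regulator T Q χ₁ i t := by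
  rw [regulator_eq_sInf, regulator_eq_sInf]
  refine csInf_le_csInf (RS_bddBelow hT ht) ?_ ?_
  · obtain ⟨ζ, hζ⟩ := hne
    exact ⟨ζ i t, ζ, hζ, rfl⟩
  · rintro z ⟨ζ, hζ, rfl⟩
    refine ⟨ζ, ⟨hζ.1, fun s hs j => le_trans (hζ.2 s hs j) (by linarith [h s hs j])⟩, rfl⟩

/-- Monotonicity in time of the regulator. -/
lemma reg_mono_t (hT : 0 ≤ T) {χ : Fin d → ℝ → ℝ} (hne : ∃ ζ, Feasible T Q χ ζ)
    {i : Fin d} {t₁ t₂ : ℝ} (h1 : t₁ ∈ Set.Icc (0:ℝ) T) (h2 : t₂ ∈ Set.Icc (0:ℝ) T)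
    (h : t₁ ≤ t₂) : regulator T Q χ i t₁ ≤ regulator T Q χ i t₂ := by
  rw [regulator_eq_sInf, regulator_eq_sInf]
  refine le_csInf ?_ ?_
  · obtain ⟨ζ, hζ⟩ := hne
    exact ⟨ζ i t₂, ζ, hζ, rfl⟩
  · rintro z ⟨ζ, hζ, rfl⟩
    exact le_trans (csInf_le (RS_bddBelow hT h1) ⟨ζ, hζ, rfl⟩) ((hζ.1 i).2.1 h1 h2 h)

/-- Subadditivity of the regulator under subtracting a constant. -/
lemma reg_sub_const (hT : 0 ≤ T) {χ : Fin d → ℝ → ℝ} {cc : ℝ}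
    (hne1 : ∃ ζ, Feasible T Q χ ζ) (hne2 : ∃ ζ, Feasible T Q (fun (_ : Fin d) (_ : ℝ) => -cc) ζ)
    {i : Fin d} {t : ℝ} (ht : t ∈ Set.Icc (0:ℝ) T) :
    regulator T Q (fun i s => χ i s - cc) i t
      ≤ regulator T Q χ i t + regulator T Q (fun _ _ => -cc) i t := by
  have hmem : ∀ z₁ ∈ RS T Q χ i t, ∀ z₂ ∈ RS T Q (fun _ _ => -cc) i t,
      z₁ + z₂ ∈ RS T Q (fun i s => χ i s - cc) i t := by
    rintro z₁ ⟨ζ₁, hζ₁, rfl⟩ z₂ ⟨ζ₂, hζ₂, rfl⟩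
    refine ⟨fun j s => ζ₁ j s + ζ₂ j s, ⟨fun j => ⟨(hζ₁.1 j).1.add' (hζ₂.1 j).1,
      fun s hs r hr hsr => add_le_add ((hζ₁.1 j).2.1 hs hr hsr) ((hζ₂.1 j).2.1 hs hr hsr),
      by simpa using add_nonneg (hζ₁.1 j).2.2 (hζ₂.1 j).2.2⟩, ?_⟩, rfl⟩
    intro s hs j
    have e1 := hζ₁.2 s hs j
    have e2 := hζ₂.2 s hs j
    have hsplit : ∑ k, refMatrix Q j k * (ζ₁ k s + ζ₂ k s)
        = (∑ k, refMatrix Q j k * ζ₁ k s) + ∑ k, refMatrix Q j k * ζ₂ k s := by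
      rw [← Finset.sum_add_distrib]
      exact Finset.sum_congr rfl fun k _ => by ring
    show (0:ℝ) ≤ χ j s - cc + ∑ k, refMatrix Q j k * (ζ₁ k s + ζ₂ k s)
    have e2' : (0:ℝ) ≤ -cc + ∑ k, refMatrix Q j k * ζ₂ k s := e2
    rw [hsplit]
    linarith
  have hS1 : (RS T Q χ i t).Nonempty := by
    obtain ⟨ζ, hζ⟩ := hne1; exact ⟨ζ i t, ζ, hζ, rfl⟩
  have hS2 : (RS T Q (fun (_ : Fin d) (_ : ℝ) => -cc) i t).Nonempty := by
    obtain ⟨ζ, hζ⟩ := hne2; exact ⟨ζ i t, ζ, hζ, rfl⟩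
  rw [regulator_eq_sInf, regulator_eq_sInf, regulator_eq_sInf]
  have step1 : ∀ z₂ ∈ RS T Q (fun (_ : Fin d) (_ : ℝ) => -cc) i t,
      sInf (RS T Q (fun i s => χ i s - cc) i t) - z₂ ≤ sInf (RS T Q χ i t) := by
    intro z₂ hz₂
    refine le_csInf hS1 ?_
    intro z₁ hz₁
    have := csInf_le (RS_bddBelow hT ht) (hmem z₁ hz₁ z₂ hz₂)
    linarith
  have step2 : sInf (RS T Q (fun i s => χ i s - cc) i t) - sInf (RS T Q χ i t)
      ≤ sInf (RS T Q (fun (_ : Fin d) (_ : ℝ) => -cc) i t) := by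
    refine le_csInf hS2 ?_
    intro z₂ hz₂
    have := step1 z₂ hz₂
    linarith
  linarith

/-- Pushforward inequality for common clamp-shift time changes. -/
lemma reg_comp_shift_le (hT : 0 ≤ T) {χ : Fin d → ℝ → ℝ} (hne : ∃ ζ, Feasible T Q χ ζ)
    {a : ℝ} (ha : 0 ≤ a) {i : Fin d} {t : ℝ} (ht : t ∈ Set.Icc (0:ℝ) T) :
    regulator T Q (fun i s => χ i (max (s - a) 0)) i t
      ≤ regulator T Q χ i (max (t - a) 0) := by
  have hmap : ∀ s ∈ Set.Icc (0:ℝ) T, max (s - a) 0 ∈ Set.Icc (0:ℝ) T := by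
    intro s hs
    exact ⟨le_max_right _ _, max_le (by linarith [hs.2]) hT⟩
  rw [regulator_eq_sInf, regulator_eq_sInf]
  refine csInf_le_csInf (RS_bddBelow hT ht) ?_ ?_
  · obtain ⟨ζ, hζ⟩ := hne
    exact ⟨ζ i (max (t - a) 0), ζ, hζ, rfl⟩
  · rintro z ⟨ζ, hζ, rfl⟩
    refine ⟨fun j s => ζ j (max (s - a) 0), ⟨fun j => ⟨cadlag_comp_shift hT ha (hζ.1 j).1,
      fun s hs r hr hsr => (hζ.1 j).2.1 (hmap s hs) (hmap r hr)
        (max_le_max (by linarith) le_rfl), ?_⟩, ?_⟩, rfl⟩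
    · show (0:ℝ) ≤ ζ j (max ((0:ℝ) - a) 0)
      have h0 : max ((0:ℝ) - a) 0 = 0 := max_eq_right (by linarith)
      rw [h0]
      exact (hζ.1 j).2.2
    · intro s hs j
      exact hζ.2 (max (s - a) 0) (hmap s hs) j

end RegLemmas2

section RegLemmas3

variable {T : ℝ} {d : ℕ} {Q : Matrix (Fin d) (Fin d) ℝ}

lemma le_supDistTuple {f g : Fin d → ℝ → ℝ} {B : ℝ}
    (hbdd : ∀ j : Fin d, ∀ s ∈ Set.Icc (0:ℝ) T, |f j s - g j s| ≤ B)
    {i : Fin d} {t : ℝ} (ht : t ∈ Set.Icc (0:ℝ) T) :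
    |f i t - g i t| ≤ supDistTuple T f g :=
  le_csSup ⟨B, by rintro r ⟨j, s, hs, rfl⟩; exact hbdd j s hs⟩ ⟨i, t, ht, rfl⟩

/-- Bound on the regulator of a nonpositive constant input, via the Lipschitz property. -/
lemma reg_negconst_le (hT : 0 < T) (hd : 0 < d) (hQ : Substochastic Q) {K : ℝ}
    (hLip : ∀ ξ ζ : Fin d → ℝ → ℝ, (∀ i, Cadlag T (ξ i)) → (∀ i, Cadlag T (ζ i)) →
      supDistTuple T (regulator T Q ξ) (regulator T Q ζ) ≤ K * supDistTuple T ξ ζ)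
    {cc : ℝ} (hcc : 0 ≤ cc) {i : Fin d} {t : ℝ} (ht : t ∈ Set.Icc (0:ℝ) T) :
    regulator T Q (fun _ _ => -cc) i t ≤ K * cc := by
  obtain ⟨c, hc0, hcM⟩ := exists_cvec hQ hcc
  have hfeas : Feasible T Q (fun _ _ => -cc) (fun j _ => c j) := by
    refine ⟨fun j => ⟨cadlag_const, monotoneOn_const, hc0 j⟩, fun s hs j => ?_⟩
    show (0:ℝ) ≤ -cc + ∑ k, refMatrix Q j k * c k
    rw [refMatrix_sum]
    have := hcM j
    linarith
  have hub : ∀ j : Fin d, ∀ s ∈ Set.Icc (0:ℝ) T,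
      regulator T Q (fun _ _ => -cc) j s ≤ c j := fun j s hs =>
    csInf_le (RS_bddBelow hT.le hs) ⟨_, hfeas, rfl⟩
  have hzero : ∀ j : Fin d, ∀ s ∈ Set.Icc (0:ℝ) T,
      regulator T Q (fun (_ : Fin d) (_ : ℝ) => (0:ℝ)) j s = 0 := by
    intro j s hs
    refine le_antisymm (csInf_le (RS_bddBelow hT.le hs)
      ⟨fun _ _ => 0, ⟨fun k => ⟨cadlag_const, monotoneOn_const, le_rfl⟩,
        fun r _ k => by simp⟩, rfl⟩) (reg_nonneg hT.le hs)
  have hdist := hLip (fun _ _ => -cc) (fun _ _ => 0)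
    (fun _ => cadlag_const) (fun _ => cadlag_const)
  have hsupeq : supDistTuple T (fun (_ : Fin d) (_ : ℝ) => -cc) (fun _ _ => (0:ℝ)) = cc := by
    have hset : {r : ℝ | ∃ i : Fin d, ∃ t ∈ Set.Icc (0:ℝ) T,
        r = |(fun (_ : Fin d) (_ : ℝ) => -cc) i t - (fun (_ : Fin d) (_ : ℝ) => (0:ℝ)) i t|}
        = {cc} := by
      ext r
      constructor
      · rintro ⟨_, _, _, rfl⟩
        simp [abs_of_nonneg hcc]
      · rintro rfl
        exact ⟨⟨0, hd⟩, 0, ⟨le_rfl, hT.le⟩, by simp [abs_of_nonneg hcc]⟩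
    show sSup {r : ℝ | ∃ i : Fin d, ∃ t ∈ Set.Icc (0:ℝ) T,
        r = |(fun (_ : Fin d) (_ : ℝ) => -cc) i t - (fun (_ : Fin d) (_ : ℝ) => (0:ℝ)) i t|} = cc
    rw [hset]
    exact csSup_singleton cc
  have hbdd : ∀ j : Fin d, ∀ s ∈ Set.Icc (0:ℝ) T,
      |regulator T Q (fun _ _ => -cc) j s - regulator T Q (fun (_ : Fin d) (_ : ℝ) => (0:ℝ)) j s|
        ≤ Finset.univ.sup' ⟨i, Finset.mem_univ i⟩ c := by
    intro j s hs
    rw [hzero j s hs, sub_zero, abs_of_nonneg (reg_nonneg hT.le hs)]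
    exact le_trans (hub j s hs) (Finset.le_sup' c (Finset.mem_univ j))
  have h5 := le_supDistTuple (i := i) (t := t) hbdd ht
  rw [hzero i t ht, sub_zero, abs_of_nonneg (reg_nonneg hT.le ht)] at h5
  calc regulator T Q (fun _ _ => -cc) i t
      ≤ supDistTuple T (regulator T Q (fun _ _ => -cc))
          (regulator T Q (fun (_ : Fin d) (_ : ℝ) => (0:ℝ))) := h5
    _ ≤ K * supDistTuple T (fun (_ : Fin d) (_ : ℝ) => -cc) (fun _ _ => (0:ℝ)) := hdist
    _ = K * cc := by rw [hsupeq]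

end RegLemmas3

/-- If the regulator map `ψ` is `K`-Lipschitz in the uniform metric, then
for coordinatewise time deformations `w⁽ⁱ⁾` of `[0,T]` and any `ξ ∈ ∏ D^{β_i}[0,T]`,
`max_i sup_t |ψ⁽ⁱ⁾(ξ∘w)(t) - ψ⁽ⁱ⁾(ξ)(t)| ≤ 3K‖β‖_∞‖w - e‖_∞`. -/
theorem regulator_composition_bound
    (T : ℝ) (hT : 0 < T) (d : ℕ) (hd : 0 < d) (β : Fin d → ℝ)
    (Q : Matrix (Fin d) (Fin d) ℝ) (hQ : Substochastic Q)
    (K : ℝ) (hK : 0 < K)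
    (hLip : ∀ ξ ζ : Fin d → ℝ → ℝ, (∀ i, Cadlag T (ξ i)) → (∀ i, Cadlag T (ζ i)) →
      supDistTuple T (regulator T Q ξ) (regulator T Q ζ) ≤ K * supDistTuple T ξ ζ)
    (w : Fin d → ℝ → ℝ) (hw : ∀ i, MonotoneOn (w i) (Set.Icc 0 T))
    (hwmap : ∀ i, Set.MapsTo (w i) (Set.Icc 0 T) (Set.Icc 0 T))
    (hw0 : ∀ i, w i 0 = 0) (hwT : ∀ i, w i T = T)
    (ξ : Fin d → ℝ → ℝ) (hξ : ∀ i, DBeta T (β i) (ξ i)) :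
    supDistTuple T (regulator T Q (fun i t => ξ i (w i t))) (regulator T Q ξ) ≤
      3 * K * (Finset.univ.sup' (⟨⟨0, hd⟩, Finset.mem_univ _⟩ :
          (Finset.univ : Finset (Fin d)).Nonempty) fun i => |β i|) *
        (Finset.univ.sup' (⟨⟨0, hd⟩, Finset.mem_univ _⟩ :
          (Finset.univ : Finset (Fin d)).Nonempty) fun i => supTimeDev T (w i)) := by
  have hT' : (0:ℝ) ≤ T := hT.le
  have hne0 : (Finset.univ : Finset (Fin d)).Nonempty := ⟨⟨0, hd⟩, Finset.mem_univ _⟩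
  set b : ℝ := Finset.univ.sup' (⟨⟨0, hd⟩, Finset.mem_univ _⟩ :
      (Finset.univ : Finset (Fin d)).Nonempty) (fun i => |β i|) with hbdef
  set dl : ℝ := Finset.univ.sup' (⟨⟨0, hd⟩, Finset.mem_univ _⟩ :
      (Finset.univ : Finset (Fin d)).Nonempty) (fun i => supTimeDev T (w i)) with hdldef
  have hb : ∀ i, |β i| ≤ b := by
    intro i
    rw [hbdef]
    exact Finset.le_sup' (fun i => |β i|) (Finset.mem_univ i)
  have hb0 : (0:ℝ) ≤ b := le_trans (abs_nonneg _) (hb ⟨0, hd⟩)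
  have hwBdd : ∀ i, BddAbove {r : ℝ | ∃ t ∈ Set.Icc (0:ℝ) T, r = |w i t - t|} := by
    intro i
    refine ⟨T, ?_⟩
    rintro r ⟨t, ht, rfl⟩
    have h1 := hwmap i ht
    exact abs_le.mpr ⟨by linarith [h1.1, ht.2], by linarith [h1.2, ht.1]⟩
  have hdev : ∀ i, ∀ t ∈ Set.Icc (0:ℝ) T, |w i t - t| ≤ dl := by
    intro i t ht
    refine le_trans (le_csSup (hwBdd i) ⟨t, ht, rfl⟩) ?_
    rw [hdldef]
    exact Finset.le_sup' (fun i => supTimeDev T (w i)) (Finset.mem_univ i)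
  have hdl0 : (0:ℝ) ≤ dl := by
    have h0 : (0:ℝ) ∈ {r : ℝ | ∃ t ∈ Set.Icc (0:ℝ) T, r = |w (⟨0, hd⟩ : Fin d) t - t|} :=
      ⟨0, ⟨le_rfl, hT'⟩, by rw [hw0]; simp⟩
    refine le_trans (le_csSup (hwBdd _) h0) ?_
    rw [hdldef]
    exact Finset.le_sup' (fun i => supTimeDev T (w i)) (Finset.mem_univ _)
  set D : ℝ := b * dl with hDdef
  have hD0 : (0:ℝ) ≤ D := mul_nonneg hb0 hdl0
  -- monotone part of ξ
  have hη : ∀ i, ∀ s t : ℝ, s ∈ Set.Icc (0:ℝ) T → t ∈ Set.Icc (0:ℝ) T → s ≤ t →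
      ξ i s - β i * s ≤ ξ i t - β i * t := fun i s t hs ht h => (hξ i).2.2 hs ht h
  have hξlb : ∀ i, ∀ s ∈ Set.Icc (0:ℝ) T, -(b * T) ≤ ξ i s := by
    intro i s hs
    have h1 := hη i 0 s ⟨le_rfl, hT'⟩ hs hs.1
    have h2 := (hξ i).2.1
    have h0 : β i * (0:ℝ) = 0 := mul_zero _
    have h3 : |β i * s| ≤ b * T := by
      rw [abs_mul]
      exact mul_le_mul (hb i) (by rw [abs_of_nonneg hs.1]; exact hs.2) (abs_nonneg _) hb0
    have h4 := neg_abs_le (β i * s)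
    linarith
  set M : ℝ := b * T + 3 * D with hMdef
  have hM0 : (0:ℝ) ≤ M := by
    have : (0:ℝ) ≤ b * T := mul_nonneg hb0 hT'
    linarith
  -- membership helpers
  have hmemshift : ∀ (a : ℝ), 0 ≤ a → ∀ s ∈ Set.Icc (0:ℝ) T, max (s - a) 0 ∈ Set.Icc (0:ℝ) T :=
    fun a ha s hs => ⟨le_max_right _ _, max_le (by linarith [hs.2]) hT'⟩
  -- nonemptiness of feasible sets
  have hfeas_ξ : ∃ ζ, Feasible T Q ξ ζ :=
    feasible_of_lb hQ hM0 (fun i t ht => by have := hξlb i t ht; linarith)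
  have hfeas_ξw : ∃ ζ, Feasible T Q (fun i t => ξ i (w i t)) ζ :=
    feasible_of_lb hQ hM0 (fun i t ht => by
      have := hξlb i (w i t) (hwmap i ht); linarith)
  have hfeas_chiL : ∃ ζ, Feasible T Q (fun i s => ξ i (max (s - dl) 0)) ζ :=
    feasible_of_lb hQ hM0 (fun i s hs => by
      have := hξlb i (max (s - dl) 0) (hmemshift dl hdl0 s hs); linarith)
  have hfeas_A : ∃ ζ, Feasible T Q (fun i s => ξ i (max (s - dl) 0) - 2 * D) ζ :=
    feasible_of_lb hQ hM0 (fun i s hs => by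
      have := hξlb i (max (s - dl) 0) (hmemshift dl hdl0 s hs); linarith)
  have hfeas_χμ : ∃ ζ, Feasible T Q (fun i s => ξ i (w i (max (s - 2 * dl) 0))) ζ :=
    feasible_of_lb hQ hM0 (fun i s hs => by
      have := hξlb i (w i (max (s - 2 * dl) 0))
        (hwmap i (hmemshift (2 * dl) (by linarith) s hs)); linarith)
  have hfeas_χμ3 : ∃ ζ, Feasible T Q (fun i s => ξ i (w i (max (s - 2 * dl) 0)) - 3 * D) ζ :=
    feasible_of_lb hQ hM0 (fun i s hs => by
      have := hξlb i (w i (max (s - 2 * dl) 0))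
        (hwmap i (hmemshift (2 * dl) (by linarith) s hs)); linarith)
  have hfeas_c2 : ∃ ζ, Feasible T Q (fun (_ : Fin d) (_ : ℝ) => -(2 * D)) ζ :=
    feasible_of_lb hQ hM0 (fun i s hs => by
      have : (0:ℝ) ≤ b * T := mul_nonneg hb0 hT'; linarith)
  have hfeas_c3 : ∃ ζ, Feasible T Q (fun (_ : Fin d) (_ : ℝ) => -(3 * D)) ζ :=
    feasible_of_lb hQ hM0 (fun i s hs => by
      have : (0:ℝ) ≤ b * T := mul_nonneg hb0 hT'; linarith)
  -- pointwise comparisons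
  have hU1 : ∀ s ∈ Set.Icc (0:ℝ) T, ∀ j,
      ξ j (max (s - dl) 0) - 2 * D ≤ ξ j (w j s) := by
    intro s hs j
    set u : ℝ := max (s - dl) 0 with hudef
    have hu : u ∈ Set.Icc (0:ℝ) T := hmemshift dl hdl0 s hs
    have hws := hwmap j hs
    have habs := abs_le.mp (hdev j s hs)
    have hu_le : u ≤ w j s := max_le (by linarith [habs.1]) hws.1
    have hmono := hη j u (w j s) hu hws hu_le
    have hul : s - dl ≤ u := le_max_left _ _
    have hdiff : w j s - u ≤ 2 * dl := by linarith [habs.2]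
    have habs2 : |β j * (w j s - u)| ≤ b * (2 * dl) := by
      rw [abs_mul]
      exact mul_le_mul (hb j) (by rw [abs_of_nonneg (by linarith)]; linarith)
        (abs_nonneg _) hb0
    have hring : β j * (w j s) - β j * u = β j * (w j s - u) := by ring
    have h2D : b * (2 * dl) = 2 * D := by rw [hDdef]; ring
    have h4 := neg_abs_le (β j * (w j s - u))
    linarith
  have hL1 : ∀ s ∈ Set.Icc (0:ℝ) T, ∀ j,
      ξ j (w j (max (s - 2 * dl) 0)) - 3 * D ≤ ξ j s := by
    intro s hs j
    set v : ℝ := max (s - 2 * dl) 0 with hvdef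
    have hv : v ∈ Set.Icc (0:ℝ) T := hmemshift (2 * dl) (by linarith) s hs
    have hwv := hwmap j hv
    have habsv := abs_le.mp (hdev j v hv)
    have hle : w j v ≤ s := by
      rcases le_or_gt (s - 2 * dl) 0 with h | h
      · have hv0 : v = 0 := max_eq_right h
        rw [hv0, hw0 j]
        exact hs.1
      · have hv0 : v = s - 2 * dl := max_eq_left h.le
        have : w j v ≤ v + dl := by linarith [habsv.2]
        rw [hv0] at this
        linarith
    have hvge : s - 2 * dl ≤ v := le_max_left _ _
    have hge : s - w j v ≤ 3 * dl := by linarith [habsv.1]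
    have hmono := hη j (w j v) s hwv hs hle
    have habs3 : |β j * (s - w j v)| ≤ b * (3 * dl) := by
      rw [abs_mul]
      exact mul_le_mul (hb j) (by rw [abs_of_nonneg (by linarith)]; linarith)
        (abs_nonneg _) hb0
    have hring : β j * s - β j * (w j v) = β j * (s - w j v) := by ring
    have h3D : b * (3 * dl) = 3 * D := by rw [hDdef]; ring
    have h4 := neg_abs_le (β j * (s - w j v))
    linarith
  have hKD0 : (0:ℝ) ≤ K * D := mul_nonneg hK.le hD0
  -- the two chains
  have chainU : ∀ i : Fin d, ∀ t ∈ Set.Icc (0:ℝ) T,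
      regulator T Q (fun i t => ξ i (w i t)) i t ≤ regulator T Q ξ i t + 3 * (K * D) := by
    intro i t ht
    have r1 : regulator T Q (fun i t => ξ i (w i t)) i t
        ≤ regulator T Q (fun i s => ξ i (max (s - dl) 0) - 2 * D) i t :=
      reg_anti hT' hU1 hfeas_A ht
    have r2 : regulator T Q (fun i s => ξ i (max (s - dl) 0) - 2 * D) i t
        ≤ regulator T Q (fun i s => ξ i (max (s - dl) 0)) i t
          + regulator T Q (fun _ _ => -(2 * D)) i t :=
      reg_sub_const hT' hfeas_chiL hfeas_c2 ht
    have r2' : regulator T Q (fun (_ : Fin d) (_ : ℝ) => -(2 * D)) i t ≤ K * (2 * D) :=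
      reg_negconst_le hT hd hQ hLip (by linarith) ht
    have r3 : regulator T Q (fun i s => ξ i (max (s - dl) 0)) i t
        ≤ regulator T Q ξ i (max (t - dl) 0) :=
      reg_comp_shift_le hT' hfeas_ξ hdl0 ht
    have r4 : regulator T Q ξ i (max (t - dl) 0) ≤ regulator T Q ξ i t :=
      reg_mono_t hT' hfeas_ξ (hmemshift dl hdl0 t ht) ht (max_le (by linarith [ht.1]) ht.1)
    linarith
  have chainL : ∀ i : Fin d, ∀ t ∈ Set.Icc (0:ℝ) T,
      regulator T Q ξ i t ≤ regulator T Q (fun i t => ξ i (w i t)) i t + 3 * (K * D) := by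
    intro i t ht
    have s1 : regulator T Q ξ i t
        ≤ regulator T Q (fun i s => ξ i (w i (max (s - 2 * dl) 0)) - 3 * D) i t :=
      reg_anti hT' hL1 hfeas_χμ3 ht
    have s2 : regulator T Q (fun i s => ξ i (w i (max (s - 2 * dl) 0)) - 3 * D) i t
        ≤ regulator T Q (fun i s => ξ i (w i (max (s - 2 * dl) 0))) i t
          + regulator T Q (fun _ _ => -(3 * D)) i t :=
      reg_sub_const hT' hfeas_χμ hfeas_c3 ht
    have s2' : regulator T Q (fun (_ : Fin d) (_ : ℝ) => -(3 * D)) i t ≤ K * (3 * D) :=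
      reg_negconst_le hT hd hQ hLip (by linarith) ht
    have s3 : regulator T Q (fun i s => ξ i (w i (max (s - 2 * dl) 0))) i t
        ≤ regulator T Q (fun i t => ξ i (w i t)) i (max (t - 2 * dl) 0) :=
      reg_comp_shift_le hT' hfeas_ξw (by linarith) ht
    have s4 : regulator T Q (fun i t => ξ i (w i t)) i (max (t - 2 * dl) 0)
        ≤ regulator T Q (fun i t => ξ i (w i t)) i t :=
      reg_mono_t hT' hfeas_ξw (hmemshift (2 * dl) (by linarith) t ht) ht
        (max_le (by linarith [ht.1]) ht.1)
    linarith
  -- conclusion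
  have hgoal : supDistTuple T (regulator T Q (fun i t => ξ i (w i t))) (regulator T Q ξ)
      ≤ 3 * (K * D) := by
    refine Real.sSup_le ?_ (by linarith)
    rintro r ⟨i, t, ht, rfl⟩
    refine abs_sub_le_iff.mpr ⟨?_, ?_⟩
    · have := chainU i t ht
      linarith
    · have := chainL i t ht
      linarith
  have : 3 * (K * D) = 3 * K * b * dl := by rw [hDdef]; ring
  linarith
end
end

section
/- Let (𝕏, d) and (𝕊, σ) be metric spaces, Φ : 𝕏 → 𝕊 Lipschitz continuous, (μ_n) Borel probability measures on 𝕏, (a_n) positive reals tending to infinity, and I : 𝕏 → [0,∞]. Assume (μ_n) satisfies the extended large deviation bounds in 𝕏 with speed a_n and rate I. Define I'(y) = inf{ I(x) : Φ(x) = y } and ν_n = μ_n ∘ Φ⁻¹, and assume that I' is a good rate function, i.e. the sublevel set {y ∈ 𝕊 : I'(y) ≤ M} is compact for every M ∈ [0,∞). Then (ν_n) satisfies the full large deviation principle in 𝕊 with speed a_n and rate I': for every open G ⊆ 𝕊, liminf_n (1/a_n) log ν_n(G) ≥ −inf_{y∈G} I'(y), and for every closed F ⊆ 𝕊, limsup_n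 (1/a_n) log ν_n(F) ≤ −inf_{y∈F} I'(y). -/
open Set Filter MeasureTheory Metric ENNReal

noncomputable section

/-- The normalized log-probability `a_n⁻¹ · log μ_n(A)` (with `log 0 = -∞`), as an `EReal`. -/
def logProbRate (a : ℕ → ℝ) (p : ℕ → ℝ≥0∞) : ℕ → EReal :=
  fun n => (((a n)⁻¹ : ℝ) : EReal) * ENNReal.log (p n)

/-- The extended-LDP lower bound: for every open `G`,
`liminf a_n⁻¹ log μ_n(G) ≥ - inf_{x ∈ G} I(x)`. -/
def ExtLDPLowerBound {X : Type*} [MetricSpace X] [MeasurableSpace X]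
    (μ : ℕ → Measure X) (a : ℕ → ℝ) (I : X → ℝ≥0∞) : Prop :=
  ∀ G : Set X, IsOpen G →
    -(⨅ x ∈ G, (I x : EReal)) ≤
      Filter.liminf (logProbRate a (fun n => μ n G)) Filter.atTop

/-- The extended-LDP upper bound: for every closed `F`,
`limsup a_n⁻¹ log μ_n(F) ≤ - sup_{ε > 0} inf_{x ∈ F^ε} I(x)`,
where `F^ε` is the closed `ε`-thickening of `F`. -/
def ExtLDPUpperBound {X : Type*} [MetricSpace X] [MeasurableSpace X]
    (μ : ℕ → Measure X) (a : ℕ → ℝ) (I : X → ℝ≥0∞) : Prop :=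
  ∀ F : Set X, IsClosed F →
    Filter.limsup (logProbRate a (fun n => μ n F)) Filter.atTop ≤
      -(⨆ (ε : ℝ) (_ : 0 < ε), ⨅ x ∈ Metric.cthickening ε F, (I x : EReal))

/-- The pushforward rate function `I'(y) = inf { I(x) : Φ(x) = y }`. -/
def pushRate {X S : Type*} (Φ : X → S) (I : X → ℝ≥0∞) : S → ℝ≥0∞ :=
  fun y => ⨅ (x : X) (_ : Φ x = y), I x

private lemma coe_iInf' {ι : Sort*} (f : ι → ℝ≥0∞) :
    ((⨅ i, f i : ℝ≥0∞) : EReal) = ⨅ i, (f i : EReal) := by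
  refine le_antisymm (le_iInf fun i => EReal.coe_ennreal_le_coe_ennreal_iff.2 (iInf_le f i)) ?_
  have h0 : (0 : EReal) ≤ ⨅ i, (f i : EReal) := le_iInf fun i => EReal.coe_ennreal_nonneg _
  have hmem : (⨅ i, (f i : EReal)) ∈ Set.range ((↑) : ℝ≥0∞ → EReal) := by
    rw [EReal.range_coe_ennreal]; exact h0
  obtain ⟨c, hc⟩ := hmem
  rw [← hc]
  refine EReal.coe_ennreal_le_coe_ennreal_iff.2 (le_iInf fun i => ?_)
  exact EReal.coe_ennreal_le_coe_ennreal_iff.1 (hc ▸ iInf_le (fun i => ((f i : ℝ≥0∞) : EReal)) i)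

private lemma coe_biInf {α : Type*} (s : Set α) (f : α → ℝ≥0∞) :
    ((⨅ x ∈ s, f x : ℝ≥0∞) : EReal) = ⨅ x ∈ s, (f x : EReal) := by
  rw [coe_iInf']
  exact iInf_congr fun x => coe_iInf' _

private lemma coe_biSup_le (g : ℝ → ℝ≥0∞) :
    ((⨆ (ε : ℝ) (_ : 0 < ε), g ε : ℝ≥0∞) : EReal) ≤ ⨆ (ε : ℝ) (_ : 0 < ε), (g ε : EReal) := by
  have h0 : (0 : EReal) ≤ ⨆ (ε : ℝ) (_ : 0 < ε), (g ε : EReal) :=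
    le_trans (EReal.coe_ennreal_nonneg (g 1))
      (le_iSup₂ (f := fun (ε : ℝ) (_ : 0 < ε) => ((g ε : ℝ≥0∞) : EReal)) 1 one_pos)
  have hmem : (⨆ (ε : ℝ) (_ : 0 < ε), ((g ε : ℝ≥0∞) : EReal)) ∈
      Set.range ((↑) : ℝ≥0∞ → EReal) := by
    rw [EReal.range_coe_ennreal]; exact h0
  obtain ⟨c, hc⟩ := hmem
  rw [← hc]
  refine EReal.coe_ennreal_le_coe_ennreal_iff.2 (iSup₂_le fun ε hε => ?_)
  exact EReal.coe_ennreal_le_coe_ennreal_iff.1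
    (hc ▸ le_iSup₂ (f := fun (ε : ℝ) (_ : 0 < ε) => ((g ε : ℝ≥0∞) : EReal)) ε hε)

private lemma pushRate_biInf {X S : Type*} (Φ : X → S) (I : X → ℝ≥0∞) (A : Set S) :
    (⨅ y ∈ A, pushRate Φ I y) = ⨅ x ∈ Φ ⁻¹' A, I x := by
  simp only [pushRate]
  apply le_antisymm
  · refine le_iInf₂ fun x hx => ?_
    exact iInf₂_le_of_le (Φ x) hx (iInf₂_le (f := fun (x' : X) (_ : Φ x' = Φ x) => I x') x rfl)
  · refine le_iInf₂ fun y hy => le_iInf₂ fun x hxy => ?_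
    exact iInf₂_le x (by rw [Set.mem_preimage, hxy]; exact hy)

/-- For a good rate function and a closed set, the sup over thickenings of the inf equals
the inf over the set (we only need one inequality). -/
private lemma good_sup_inf {S : Type*} [MetricSpace S] (I' : S → ℝ≥0∞)
    (hgood : ∀ M : ℝ≥0∞, M ≠ ⊤ → IsCompact {y : S | I' y ≤ M})
    (F : Set S) (hF : IsClosed F) :
    (⨅ y ∈ F, I' y) ≤ ⨆ (ε : ℝ) (_ : 0 < ε), ⨅ y ∈ Metric.cthickening ε F, I' y := by
  set s := ⨆ (ε : ℝ) (_ : 0 < ε), ⨅ y ∈ Metric.cthickening ε F, I' y with hs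
  rcases eq_or_ne s ⊤ with h | h
  · simp [h]
  have hex : ∀ n : ℕ, ∃ z, z ∈ Metric.cthickening ((n : ℝ) + 1)⁻¹ F ∧
      I' z < s + ((n : ℝ≥0∞) + 1)⁻¹ := by
    intro n
    have h1 : (⨅ y ∈ Metric.cthickening ((n : ℝ) + 1)⁻¹ F, I' y) ≤ s :=
      le_iSup₂ (f := fun (ε : ℝ) (_ : 0 < ε) => ⨅ y ∈ Metric.cthickening ε F, I' y)
        ((n : ℝ) + 1)⁻¹ (by positivity)
    have h2 : (⨅ y ∈ Metric.cthickening ((n : ℝ) + 1)⁻¹ F, I' y) < s + ((n : ℝ≥0∞) + 1)⁻¹ :=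
      h1.trans_lt (ENNReal.lt_add_right h (by simp))
    simp only [iInf_lt_iff] at h2
    obtain ⟨z, hz1, hz2⟩ := h2
    exact ⟨z, hz1, hz2⟩
  choose y hyF hyI using hex
  have hinv_le_one : ∀ n : ℕ, ((n : ℝ≥0∞) + 1)⁻¹ ≤ 1 :=
    fun n => ENNReal.inv_le_one.2 le_add_self
  have hyK : ∀ n, y n ∈ {z : S | I' z ≤ s + 1} := fun n =>
    ((hyI n).le.trans (add_le_add le_rfl (hinv_le_one n)))
  obtain ⟨ylim, hylimK, φ, hφ, htends⟩ :=
    (hgood (s + 1) (ENNReal.add_ne_top.2 ⟨h, ENNReal.one_ne_top⟩)).tendsto_subseq hyK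
  have hφk : ∀ k, (k : ℕ) ≤ φ k := fun k => hφ.le_apply
  have hylimF : ylim ∈ F := by
    rw [← hF.closure_eq, Metric.closure_eq_iInter_cthickening]
    refine Set.mem_iInter₂.2 fun δ hδ => ?_
    refine Metric.isClosed_cthickening.mem_of_tendsto htends ?_
    filter_upwards [Filter.eventually_ge_atTop ⌈δ⁻¹⌉₊] with k hk
    have h1 : δ⁻¹ ≤ (φ k : ℝ) + 1 := by
      have := Nat.le_ceil δ⁻¹
      have h2 : (⌈δ⁻¹⌉₊ : ℝ) ≤ (φ k : ℝ) := by exact_mod_cast le_trans hk (hφk k)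
      linarith
    have h2 : ((φ k : ℝ) + 1)⁻¹ ≤ δ := by
      rw [inv_le_comm₀ (by positivity) hδ]
      exact h1
    exact Metric.cthickening_mono h2 F (hyF (φ k))
  have hIy : I' ylim ≤ s := by
    refine ENNReal.le_of_forall_pos_le_add fun ε hε hstop => ?_
    obtain ⟨m, hm⟩ := exists_nat_ge (ε⁻¹ : NNReal)
    have hεinv : ((ε : ℝ≥0∞))⁻¹ ≤ (m : ℝ≥0∞) + 1 := by
      rw [← ENNReal.coe_inv hε.ne']
      exact le_trans (by exact_mod_cast hm) le_self_add
    have hm' : ((m : ℝ≥0∞) + 1)⁻¹ ≤ (ε : ℝ≥0∞) := by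
      rw [← inv_inv (ε : ℝ≥0∞)]
      exact ENNReal.inv_le_inv' hεinv
    have hKm : IsClosed {z : S | I' z ≤ s + ((m : ℝ≥0∞) + 1)⁻¹} :=
      (hgood _ (ENNReal.add_ne_top.2 ⟨h, by simp⟩)).isClosed
    have hmem : ylim ∈ {z : S | I' z ≤ s + ((m : ℝ≥0∞) + 1)⁻¹} := by
      refine hKm.mem_of_tendsto htends ?_
      filter_upwards [Filter.eventually_ge_atTop m] with k hk
      have hmk : ((φ k : ℝ≥0∞) + 1)⁻¹ ≤ ((m : ℝ≥0∞) + 1)⁻¹ := by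
        gcongr
        exact_mod_cast le_trans hk (hφk k)
      exact (hyI (φ k)).le.trans (add_le_add le_rfl hmk)
    exact hmem.trans (add_le_add le_rfl hm')
  exact le_trans (iInf₂_le ylim hylimF) hIy

private lemma lip_thick {X S : Type*} [MetricSpace X] [MetricSpace S]
    (Φ : X → S) (L : NNReal) (hΦ : LipschitzWith L Φ) (F : Set S) {ε' : ℝ} (hε' : 0 < ε') :
    Metric.cthickening (ε' / (2 * ((L : ℝ) + 1))) (Φ ⁻¹' F) ⊆
      Φ ⁻¹' (Metric.cthickening ε' F) := by
  intro x hx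
  set ε := ε' / (2 * ((L : ℝ) + 1)) with hεdef
  have hL1 : (0 : ℝ) < (L : ℝ) + 1 := by positivity
  have hε : 0 < ε := by positivity
  rw [Metric.mem_cthickening_iff] at hx
  have hx2 : EMetric.infEdist x (Φ ⁻¹' F) < ENNReal.ofReal (2 * ε) :=
    hx.trans_lt ((ENNReal.ofReal_lt_ofReal_iff (by positivity)).2 (by linarith))
  obtain ⟨z, hzF, hz⟩ := EMetric.infEdist_lt_iff.1 hx2
  refine Metric.mem_cthickening_iff.2 ?_
  have hLcoe : ((L : ℝ≥0∞) + 1) = ENNReal.ofReal ((L : ℝ) + 1) := by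
    rw [ENNReal.ofReal_add (by positivity) zero_le_one, ENNReal.ofReal_coe_nnreal,
      ENNReal.ofReal_one]
  calc EMetric.infEdist (Φ x) F ≤ edist (Φ x) (Φ z) := EMetric.infEdist_le_edist_of_mem hzF
    _ ≤ L * edist x z := hΦ.edist_le_mul x z
    _ ≤ ((L : ℝ≥0∞) + 1) * ENNReal.ofReal (2 * ε) :=
        mul_le_mul' le_self_add hz.le
    _ = ENNReal.ofReal ε' := by
        rw [hLcoe, ← ENNReal.ofReal_mul hL1.le]
        congr 1
        rw [hεdef]
        field_simp

/-- If `(μ_n)` satisfies the extended LDP bounds in `𝕏` with speed `a_n`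
and rate `I`, `Φ : 𝕏 → 𝕊` is Lipschitz, and the pushforward rate
`I'(y) = inf{I(x) : Φ(x) = y}` is a good rate function (compact sublevel sets for every
finite level), then the pushforward measures `ν_n = μ_n ∘ Φ⁻¹` satisfy the full LDP in `𝕊`
with speed `a_n` and rate `I'`. -/
theorem contraction_principle_good_rate
    {X S : Type*} [MetricSpace X] [MeasurableSpace X] [BorelSpace X]
    [MetricSpace S] [MeasurableSpace S] [BorelSpace S]
    (Φ : X → S) (L : NNReal) (hΦ : LipschitzWith L Φ)
    (μ : ℕ → Measure X) (hprob : ∀ n, IsProbabilityMeasure (μ n))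
    (a : ℕ → ℝ) (ha : ∀ n, 0 < a n) (ha' : Filter.Tendsto a Filter.atTop Filter.atTop)
    (I : X → ℝ≥0∞)
    (hlow : ExtLDPLowerBound μ a I) (hup : ExtLDPUpperBound μ a I)
    (hgood : ∀ M : ℝ≥0∞, M ≠ ⊤ → IsCompact {y : S | pushRate Φ I y ≤ M}) :
    (∀ G : Set S, IsOpen G →
      -(⨅ y ∈ G, (pushRate Φ I y : EReal)) ≤
        Filter.liminf (logProbRate a (fun n => (μ n).map Φ G)) Filter.atTop) ∧
    (∀ F : Set S, IsClosed F →
      Filter.limsup (logProbRate a (fun n => (μ n).map Φ F)) Filter.atTop ≤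
        -(⨅ y ∈ F, (pushRate Φ I y : EReal))) := by
  have hmeas : Measurable Φ := hΦ.continuous.measurable
  constructor
  · intro G hG
    have heq : (fun n => (μ n).map Φ G) = fun n => μ n (Φ ⁻¹' G) := by
      funext n; exact Measure.map_apply hmeas hG.measurableSet
    rw [heq]
    refine le_trans (le_of_eq ?_) (hlow (Φ ⁻¹' G) (hG.preimage hΦ.continuous))
    congr 1
    rw [← coe_biInf, ← coe_biInf, pushRate_biInf]
  · intro F hF
    have heq : (fun n => (μ n).map Φ F) = fun n => μ n (Φ ⁻¹' F) := by
      funext n; exact Measure.map_apply hmeas hF.measurableSet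
    rw [heq]
    refine le_trans (hup (Φ ⁻¹' F) (hF.preimage hΦ.continuous)) ?_
    rw [EReal.neg_le_neg_iff]
    -- key ENNReal inequality
    have key : (⨅ y ∈ F, pushRate Φ I y) ≤
        ⨆ (ε : ℝ) (_ : 0 < ε), ⨅ x ∈ Metric.cthickening ε (Φ ⁻¹' F), I x := by
      refine le_trans (good_sup_inf (pushRate Φ I) hgood F hF) ?_
      refine iSup₂_le fun ε' hε' => ?_
      have hsub := lip_thick Φ L hΦ F hε'
      have h1 : (⨅ y ∈ Metric.cthickening ε' F, pushRate Φ I y) ≤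
          ⨅ x ∈ Metric.cthickening (ε' / (2 * ((L : ℝ) + 1))) (Φ ⁻¹' F), I x := by
        rw [pushRate_biInf]
        exact biInf_mono fun x hx => hsub hx
      refine h1.trans (le_iSup₂ (f := fun (ε : ℝ) (_ : 0 < ε) =>
        ⨅ x ∈ Metric.cthickening ε (Φ ⁻¹' F), I x) _ (by positivity))
    calc (⨅ y ∈ F, (pushRate Φ I y : EReal))
        = ((⨅ y ∈ F, pushRate Φ I y : ℝ≥0∞) : EReal) := (coe_biInf _ _).symm
      _ ≤ ((⨆ (ε : ℝ) (_ : 0 < ε),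
            ⨅ x ∈ Metric.cthickening ε (Φ ⁻¹' F), I x : ℝ≥0∞) : EReal) :=
          EReal.coe_ennreal_le_coe_ennreal_iff.2 key
      _ ≤ ⨆ (ε : ℝ) (_ : 0 < ε),
            ((⨅ x ∈ Metric.cthickening ε (Φ ⁻¹' F), I x : ℝ≥0∞) : EReal) :=
          coe_biSup_le _
      _ = ⨆ (ε : ℝ) (_ : 0 < ε), ⨅ x ∈ Metric.cthickening ε (Φ ⁻¹' F), (I x : EReal) := by
          refine iSup_congr fun ε => iSup_congr fun hε => coe_biInf _ _
end
end
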